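/- For every real Banach space E there exists a free Banach f-algebra over E; that is, there exist a Banach f-algebra A and a linear isometric embedding η : E → A such that for every Banach f-algebra B and every linear operator T : E → B with ‖T‖ ≤ 1 there exists a unique lattice-algebra homomorphism T̂ : A → B with T̂ ∘ η = T and ‖T̂‖ = ‖T‖. -/

import Mathlib

/-- A bundled Banach f-algebra. -/
structure BanachFAlg : Type 1 where
  carrier : Type
  [grp : NormedAddCommGroup carrier]
  [lat : Lattice carrier]
  [ordgrp : IsOrderedAddMonoid carrier]
  [solid : HasSolidNorm carrier]
  [mod : NormedSpace ℝ carrier]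
  [compl : CompleteSpace carrier]
  mul : carrier → carrier → carrier
  mul_assoc' : ∀ a b c, mul (mul a b) c = mul a (mul b c)
  add_mul' : ∀ a b c, mul (a + b) c = mul a c + mul b c
  mul_add' : ∀ a b c, mul a (b + c) = mul a b + mul a c
  smul_mul' : ∀ (r : ℝ) (a b), mul (r • a) b = r • mul a b
  mul_smul' : ∀ (r : ℝ) (a b), mul a (r • b) = r • mul a b
  mul_nonneg' : ∀ a b, 0 ≤ a → 0 ≤ b → 0 ≤ mul a b
  inf_mul_left' : ∀ a b c, a ⊓ b = 0 → 0 ≤ c → mul c a ⊓ b = 0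
  inf_mul_right' : ∀ a b c, a ⊓ b = 0 → 0 ≤ c → mul a c ⊓ b = 0
  norm_mul_le' : ∀ a b, ‖mul a b‖ ≤ ‖a‖ * ‖b‖

attribute [instance] BanachFAlg.grp BanachFAlg.lat BanachFAlg.ordgrp BanachFAlg.solid BanachFAlg.mod BanachFAlg.compl

/-- Lattice-algebra homomorphism between bundled Banach f-algebras. -/
def IsLatAlgHom (A B : BanachFAlg) (T : A.carrier →L[ℝ] B.carrier) : Prop :=
  (∀ a b, T (A.mul a b) = B.mul (T a) (T b)) ∧ (∀ a b, T (a ⊔ b) = T a ⊔ T b)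

/-- `(A, η)` is a free Banach f-algebra over `E`. -/
def IsFreeBanachFAlg (E : Type) [NormedAddCommGroup E] [NormedSpace ℝ E]
    (A : BanachFAlg) (η : E →ₗᵢ[ℝ] A.carrier) : Prop :=
  ∀ (B : BanachFAlg) (T : E →L[ℝ] B.carrier), ‖T‖ ≤ 1 →
    ∃! That : A.carrier →L[ℝ] B.carrier,
      IsLatAlgHom A B That ∧ (∀ x, That (η x) = T x) ∧ ‖That‖ = ‖T‖



open scoped ENNReal




section OrderSmul

variable {X : Type*} [NormedAddCommGroup X] [Lattice X] [IsOrderedAddMonoid X] [HasSolidNorm X]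

theorem myInfAdd {a b c : X} (ha : 0 ≤ a) (hb : 0 ≤ b) (hc : 0 ≤ c) :
    a ⊓ (b + c) ≤ a ⊓ b + a ⊓ c := by
  set d := a ⊓ (b + c) with hd
  have key : d - a ⊓ b ≤ a ⊓ c := by
    refine le_inf ?_ ?_
    · have h0 : (0 : X) ≤ a ⊓ b := le_inf ha hb
      have hda : d ≤ a := inf_le_left
      calc d - a ⊓ b ≤ a + a ⊓ b - a ⊓ b := by
            exact sub_le_sub_right (hda.trans (le_add_of_nonneg_right h0)) _
        _ = a := by abel
    · have : d - a ⊓ b = (d - a) ⊔ (d - b) := by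
        rw [sub_eq_add_neg, neg_inf, add_sup, ← sub_eq_add_neg, ← sub_eq_add_neg]
      rw [this]
      refine sup_le ?_ ?_
      · exact (sub_nonpos.mpr inf_le_left).trans hc
      · rw [sub_le_iff_le_add']
        exact inf_le_right
  have := add_le_add_left key (a ⊓ b)
  calc d = d - a ⊓ b + a ⊓ b := by abel
    _ ≤ a ⊓ c + a ⊓ b := this
    _ = a ⊓ b + a ⊓ c := by abel

theorem myInfNsmul {x y : X} (h : x ⊓ y = 0) : ∀ n : ℕ, x ⊓ (n • y) = 0 := by
  have hx : 0 ≤ x := (le_of_eq h.symm).trans inf_le_left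
  have hy : 0 ≤ y := (le_of_eq h.symm).trans inf_le_right
  intro n
  induction n with
  | zero => simpa using inf_eq_right.mpr hx
  | succ n ih =>
    have h1 : (0:X) ≤ x ⊓ ((n + 1) • y) := le_inf hx (nsmul_nonneg hy _)
    have h2 : x ⊓ ((n + 1) • y) ≤ 0 := by
      rw [succ_nsmul]
      calc x ⊓ (n • y + y) ≤ x ⊓ (n • y) + x ⊓ y := myInfAdd hx (nsmul_nonneg hy n) hy
        _ = 0 := by rw [ih, h, add_zero]
    exact le_antisymm h2 h1

theorem myNonnegOfNsmul {z : X} {n : ℕ} (hn : 0 < n) (h : 0 ≤ n • z) : 0 ≤ z := by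
  have hd : z⁻ ⊓ z⁺ = 0 := by rw [inf_comm]; exact posPart_inf_negPart_eq_zero z
  have hsub : n • z = n • z⁺ - n • z⁻ := by rw [← nsmul_sub, posPart_sub_negPart]
  have hle : n • z⁻ ≤ n • z⁺ := by
    have := h; rw [hsub, sub_nonneg] at this; exact this
  have h1 : z⁻ ≤ n • z⁻ := by
    have : n • z⁻ - z⁻ = (n - 1) • z⁻ := by
      have hn' : (n - 1) + 1 = n := Nat.succ_pred_eq_of_pos hn
      rw [← hn', succ_nsmul]
      abel
    have h2 : (0:X) ≤ (n-1) • z⁻ := nsmul_nonneg (negPart_nonneg z) _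
    rw [← this, sub_nonneg] at h2; exact h2
  have h3 : z⁻ ⊓ (n • z⁺) = 0 := myInfNsmul hd n
  have h4 : z⁻ = z⁻ ⊓ (n • z⁺) := (inf_eq_left.mpr (h1.trans hle)).symm
  have h5 : z⁻ = 0 := by rw [h4, h3]
  exact negPart_eq_zero.mp h5

end OrderSmul

section RealSmul

variable {X : Type*} [NormedAddCommGroup X] [Lattice X] [IsOrderedAddMonoid X] [HasSolidNorm X] [NormedSpace ℝ X]

theorem myRatSmulNonneg {q : ℚ} (hq : 0 ≤ q) {x : X} (hx : 0 ≤ x) : 0 ≤ (q : ℝ) • x := by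
  have hden : (0:ℝ) < q.den := by exact_mod_cast q.pos
  have hnum : 0 ≤ q.num := Rat.num_nonneg.mpr hq
  have key : (q.den : ℕ) • ((q:ℝ) • x) = (q.num.toNat : ℕ) • x := by
    rw [← Nat.cast_smul_eq_nsmul ℝ, ← Nat.cast_smul_eq_nsmul ℝ, smul_smul]
    congr 1
    have h2 : ((q.num.toNat : ℕ) : ℝ) = (q.num : ℝ) := by
      exact_mod_cast congrArg (fun z : ℤ => (z : ℝ)) (Int.toNat_of_nonneg hnum)
    rw [h2, Rat.cast_def]
    field_simp
  apply myNonnegOfNsmul (n := q.den) q.pos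
  rw [key]
  exact nsmul_nonneg hx _

theorem mySmulNonneg {c : ℝ} (hc : 0 ≤ c) {x : X} (hx : 0 ≤ x) : 0 ≤ c • x := by
  -- approximate c from above by rationals
  have hlim : ∀ n : ℕ, ∃ q : ℚ, c < q ∧ (q:ℝ) < c + 1/(n+1) := by
    intro n
    have h0 : (0:ℝ) < 1/(n+1) := by positivity
    exact exists_rat_btwn (by linarith)
  choose q hq1 hq2 using hlim
  have hqn : ∀ n, 0 ≤ q n := fun n => by
    have := (hq1 n); exact_mod_cast hc.trans this.le
  have htend : Filter.Tendsto (fun n : ℕ => ((q n : ℝ))) Filter.atTop (nhds c) := by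
    apply tendsto_of_tendsto_of_tendsto_of_le_of_le (g := fun _ => c)
      (h := fun n : ℕ => c + 1/(n+1)) tendsto_const_nhds
    · have : Filter.Tendsto (fun n : ℕ => 1/((n:ℝ)+1)) Filter.atTop (nhds 0) :=
        tendsto_one_div_add_atTop_nhds_zero_nat
      simpa using tendsto_const_nhds.add this
    · exact fun n => (hq1 n).le
    · exact fun n => (hq2 n).le
  have hsm : Filter.Tendsto (fun n : ℕ => ((q n : ℝ)) • x) Filter.atTop (nhds (c • x)) :=
    (htend.smul tendsto_const_nhds)
  exact isClosed_nonneg.mem_of_tendsto hsm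
    (Filter.Eventually.of_forall fun n => myRatSmulNonneg (hqn n) hx)

theorem mySmulLe {c : ℝ} (hc : 0 ≤ c) {a b : X} (h : a ≤ b) : c • a ≤ c • b := by
  have := mySmulNonneg hc (sub_nonneg.mpr h)
  rw [smul_sub, sub_nonneg] at this; exact this

theorem mySmulSelfLe {c : ℝ} (hc0 : 0 ≤ c) (hc1 : c ≤ 1) {x : X} (hx : 0 ≤ x) : c • x ≤ x := by
  have := mySmulNonneg (sub_nonneg.mpr hc1) hx
  rw [sub_smul, one_smul, sub_nonneg] at this; exact this

theorem mySmulSup {c : ℝ} (hc : 0 < c) (x y : X) : c • (x ⊔ y) = c • x ⊔ c • y := by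
  refine le_antisymm ?_ (sup_le (mySmulLe hc.le le_sup_left) (mySmulLe hc.le le_sup_right))
  have h1 : x ≤ c⁻¹ • (c • x ⊔ c • y) := by
    have := mySmulLe (inv_nonneg.mpr hc.le) (le_sup_left : c • x ≤ c • x ⊔ c • y)
    rwa [smul_smul, inv_mul_cancel₀ hc.ne', one_smul] at this
  have h2 : y ≤ c⁻¹ • (c • x ⊔ c • y) := by
    have := mySmulLe (inv_nonneg.mpr hc.le) (le_sup_right : c • y ≤ c • x ⊔ c • y)
    rwa [smul_smul, inv_mul_cancel₀ hc.ne', one_smul] at this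
  have := mySmulLe hc.le (sup_le h1 h2)
  rwa [smul_smul, mul_inv_cancel₀ hc.ne', one_smul] at this

theorem mySmulInfZero {c : ℝ} (hc0 : 0 ≤ c) (hc1 : c ≤ 1) {m b : X} (h : m ⊓ b = 0) :
    (c • m) ⊓ b = 0 := by
  have hm : 0 ≤ m := (le_of_eq h.symm).trans inf_le_left
  have hb : 0 ≤ b := (le_of_eq h.symm).trans inf_le_right
  refine le_antisymm ?_ (le_inf (mySmulNonneg hc0 hm) hb)
  calc (c • m) ⊓ b ≤ m ⊓ b := inf_le_inf_right _ (mySmulSelfLe hc0 hc1 hm)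
    _ = 0 := h

end RealSmul

section Terms

inductive FT (E : Type) : Type
  | of : E → FT E
  | add : FT E → FT E → FT E
  | smul : ℝ → FT E → FT E
  | mul : FT E → FT E → FT E
  | sup : FT E → FT E → FT E

variable {E : Type} [NormedAddCommGroup E] [NormedSpace ℝ E]

noncomputable def fev (B : BanachFAlg) (T : E → B.carrier) : FT E → B.carrier
  | .of x => T x
  | .add u v => fev B T u + fev B T v
  | .smul r u => r • fev B T u
  | .mul u v => B.mul (fev B T u) (fev B T v)
  | .sup u v => fev B T u ⊔ fev B T v

noncomputable def bnd : FT E → ℝ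
  | .of x => ‖x‖
  | .add u v => bnd u + bnd v
  | .smul r u => |r| * bnd u
  | .mul u v => bnd u * bnd v
  | .sup u v => bnd u + bnd v

theorem bnd_nonneg : ∀ w : FT E, 0 ≤ bnd w
  | .of x => norm_nonneg x
  | .add u v => add_nonneg (bnd_nonneg u) (bnd_nonneg v)
  | .smul r u => mul_nonneg (abs_nonneg r) (bnd_nonneg u)
  | .mul u v => mul_nonneg (bnd_nonneg u) (bnd_nonneg v)
  | .sup u v => add_nonneg (bnd_nonneg u) (bnd_nonneg v)

theorem fev_bnd (B : BanachFAlg) (T : E → B.carrier) (hT : ∀ x, ‖T x‖ ≤ ‖x‖) :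
    ∀ w : FT E, ‖fev B T w‖ ≤ bnd w
  | .of x => hT x
  | .add u v => (norm_add_le _ _).trans
      (add_le_add (fev_bnd B T hT u) (fev_bnd B T hT v))
  | .smul r u => by
      rw [fev, norm_smul, Real.norm_eq_abs, bnd]
      exact mul_le_mul_of_nonneg_left (fev_bnd B T hT u) (abs_nonneg r)
  | .mul u v => (B.norm_mul_le' _ _).trans
      (mul_le_mul (fev_bnd B T hT u) (fev_bnd B T hT v) (norm_nonneg _) (bnd_nonneg u))
  | .sup u v => (norm_sup_le_add _ _).trans
      (add_le_add (fev_bnd B T hT u) (fev_bnd B T hT v))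

theorem fev_map {B C : BanachFAlg} {T : E → B.carrier} {T' : E → C.carrier}
    (Φ : B.carrier → C.carrier)
    (hadd : ∀ a b, Φ (a + b) = Φ a + Φ b)
    (hsmul : ∀ (r : ℝ) a, Φ (r • a) = r • Φ a)
    (hmul : ∀ a b, Φ (B.mul a b) = C.mul (Φ a) (Φ b))
    (hsup : ∀ a b, Φ (a ⊔ b) = Φ a ⊔ Φ b)
    (hT : ∀ x, Φ (T x) = T' x) :
    ∀ w, Φ (fev B T w) = fev C T' w
  | .of x => hT x
  | .add u v => by rw [fev, hadd, fev_map Φ hadd hsmul hmul hsup hT u,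
      fev_map Φ hadd hsmul hmul hsup hT v, fev]
  | .smul r u => by rw [fev, hsmul, fev_map Φ hadd hsmul hmul hsup hT u, fev]
  | .mul u v => by rw [fev, hmul, fev_map Φ hadd hsmul hmul hsup hT u,
      fev_map Φ hadd hsmul hmul hsup hT v, fev]
  | .sup u v => by rw [fev, hsup, fev_map Φ hadd hsmul hmul hsup hT u,
      fev_map Φ hadd hsmul hmul hsup hT v, fev]

theorem fev_zero_map (B : BanachFAlg) : ∀ w : FT E, fev B (fun _ => (0 : B.carrier)) w = 0
  | .of _ => rfl
  | .add u v => by rw [fev, fev_zero_map B u, fev_zero_map B v, add_zero]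
  | .smul r u => by rw [fev, fev_zero_map B u, smul_zero]
  | .mul u v => by
      rw [fev, fev_zero_map B u, fev_zero_map B v]
      have := B.smul_mul' 0 0 (0 : B.carrier)
      simpa using this
  | .sup u v => by rw [fev, fev_zero_map B u, fev_zero_map B v, sup_idem]

end Terms

section Examples

/-- `ℝ` as a Banach f-algebra. -/
noncomputable def RBFA : BanachFAlg where
  carrier := ℝ
  mul := (· * ·)
  mul_assoc' := mul_assoc
  add_mul' := add_mul
  mul_add' := mul_add
  smul_mul' := fun r a b => by simp [smul_eq_mul]; ring
  mul_smul' := fun r a b => by simp [smul_eq_mul]; ring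
  mul_nonneg' := fun a b => mul_nonneg
  inf_mul_left' := fun a b c h hc => by
    have hb : (0:ℝ) ≤ b := (le_of_eq h.symm).trans inf_le_right
    rcases le_total a b with hab | hab
    · have ha0 : a = 0 := by
        have := inf_eq_left.mpr hab; rw [this] at h; exact h
      simp only [ha0, mul_zero]
      exact inf_eq_left.mpr hb
    · have hb0 : b = 0 := by
        have := inf_eq_right.mpr hab; rw [this] at h; exact h
      simp only [hb0]
      exact inf_eq_right.mpr (mul_nonneg hc ((le_of_eq h.symm).trans inf_le_left))
  inf_mul_right' := fun a b c h hc => by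
    have ha : (0:ℝ) ≤ a := (le_of_eq h.symm).trans inf_le_left
    have hb : (0:ℝ) ≤ b := (le_of_eq h.symm).trans inf_le_right
    rcases le_total a b with hab | hab
    · have ha0 : a = 0 := by
        have := inf_eq_left.mpr hab; rw [this] at h; exact h
      simp only [ha0, zero_mul]
      exact inf_eq_left.mpr hb
    · have hb0 : b = 0 := by
        have := inf_eq_right.mpr hab; rw [this] at h; exact h
      simp only [hb0]
      exact inf_eq_right.mpr (mul_nonneg ha hc)
  norm_mul_le' := fun a b => by rw [Real.norm_eq_abs, Real.norm_eq_abs, Real.norm_eq_abs, abs_mul]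

/-- Rescaled multiplication. -/
noncomputable def rescale (B : BanachFAlg) (u : ℝ) (h0 : 0 < u) (h1 : u ≤ 1) : BanachFAlg where
  carrier := B.carrier
  mul a b := u • B.mul a b
  mul_assoc' a b c := by
    show u • B.mul (u • B.mul a b) c = u • B.mul a (u • B.mul b c)
    rw [B.smul_mul', B.mul_smul', B.mul_assoc']
  add_mul' a b c := by
    show u • B.mul (a + b) c = u • B.mul a c + u • B.mul b c
    rw [B.add_mul', smul_add]
  mul_add' a b c := by
    show u • B.mul a (b + c) = u • B.mul a b + u • B.mul a c
    rw [B.mul_add', smul_add]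
  smul_mul' r a b := by
    show u • B.mul (r • a) b = r • (u • B.mul a b)
    rw [B.smul_mul', smul_comm]
  mul_smul' r a b := by
    show u • B.mul a (r • b) = r • (u • B.mul a b)
    rw [B.mul_smul', smul_comm]
  mul_nonneg' a b ha hb := mySmulNonneg h0.le (B.mul_nonneg' a b ha hb)
  inf_mul_left' a b c h hc := mySmulInfZero h0.le h1 (B.inf_mul_left' a b c h hc)
  inf_mul_right' a b c h hc := mySmulInfZero h0.le h1 (B.inf_mul_right' a b c h hc)
  norm_mul_le' a b := by
    rw [norm_smul, Real.norm_eq_abs, abs_of_pos h0]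
    calc u * ‖B.mul a b‖ ≤ 1 * ‖B.mul a b‖ :=
          mul_le_mul_of_nonneg_right h1 (norm_nonneg _)
      _ = ‖B.mul a b‖ := one_mul _
      _ ≤ ‖a‖ * ‖b‖ := B.norm_mul_le' a b

end Examples

section BFAFacts

theorem bfa_zero_mul (B : BanachFAlg) (a : B.carrier) : B.mul 0 a = 0 := by
  have := B.smul_mul' 0 0 a
  simpa using this

theorem bfa_mul_zero (B : BanachFAlg) (a : B.carrier) : B.mul a 0 = 0 := by
  have := B.mul_smul' 0 a 0
  simpa using this

theorem bfa_sub_mul (B : BanachFAlg) (a b c : B.carrier) :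
    B.mul (a - b) c = B.mul a c - B.mul b c := by
  have := B.add_mul' (a - b) b c
  rw [sub_add_cancel] at this
  rw [eq_sub_iff_add_eq, ← this]

theorem bfa_mul_sub (B : BanachFAlg) (a b c : B.carrier) :
    B.mul a (b - c) = B.mul a b - B.mul a c := by
  have := B.mul_add' a (b - c) c
  rw [sub_add_cancel] at this
  rw [eq_sub_iff_add_eq, ← this]

theorem bfa_mul_continuous (B : BanachFAlg) :
    Continuous (fun p : B.carrier × B.carrier => B.mul p.1 p.2) := by
  rw [continuous_iff_continuousAt]
  intro q
  rw [ContinuousAt, tendsto_iff_norm_sub_tendsto_zero]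
  have hb : ∀ p : B.carrier × B.carrier,
      ‖B.mul p.1 p.2 - B.mul q.1 q.2‖ ≤ ‖p.1 - q.1‖ * ‖p.2‖ + ‖q.1‖ * ‖p.2 - q.2‖ := by
    intro p
    have hdec : B.mul p.1 p.2 - B.mul q.1 q.2
        = B.mul (p.1 - q.1) p.2 + B.mul q.1 (p.2 - q.2) := by
      rw [bfa_sub_mul, bfa_mul_sub]; abel
    rw [hdec]
    exact (norm_add_le _ _).trans (add_le_add (B.norm_mul_le' _ _) (B.norm_mul_le' _ _))
  refine squeeze_zero (fun p => norm_nonneg _) hb ?_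
  have h1 : Filter.Tendsto (fun p : B.carrier × B.carrier => ‖p.1 - q.1‖ * ‖p.2‖ + ‖q.1‖ * ‖p.2 - q.2‖) (nhds q) (nhds (‖q.1 - q.1‖ * ‖q.2‖ + ‖q.1‖ * ‖q.2 - q.2‖)) := by
    apply Filter.Tendsto.add
    · exact (((continuous_fst.sub continuous_const).norm).mul continuous_snd.norm).tendsto q
    · exact (continuous_const.mul ((continuous_snd.sub continuous_const).norm)).tendsto q
  simpa using h1

end BFAFacts

section LpLattice

variable {ι : Type} (C : ι → BanachFAlg)

abbrev lpc : Type := lp (fun i => (C i).carrier) ∞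

variable {C}

theorem lpc_mem_sup (f g : lpc C) :
    Memℓp (fun i => f i ⊔ g i) (∞ : ENNReal) := by
  apply memℓp_infty
  refine ⟨‖f‖ + ‖g‖, ?_⟩
  rintro _ ⟨i, rfl⟩
  exact (norm_sup_le_add _ _).trans (add_le_add
    (lp.norm_apply_le_norm ENNReal.top_ne_zero f i)
    (lp.norm_apply_le_norm ENNReal.top_ne_zero g i))

theorem lpc_mem_inf (f g : lpc C) :
    Memℓp (fun i => f i ⊓ g i) (∞ : ENNReal) := by
  apply memℓp_infty
  refine ⟨‖f‖ + ‖g‖, ?_⟩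
  rintro _ ⟨i, rfl⟩
  exact (norm_inf_le_add _ _).trans (add_le_add
    (lp.norm_apply_le_norm ENNReal.top_ne_zero f i)
    (lp.norm_apply_le_norm ENNReal.top_ne_zero g i))

instance lpcPO : PartialOrder (lpc C) where
  le f g := ∀ i, f i ≤ g i
  le_refl f i := le_rfl
  le_trans f g h hfg hgh i := (hfg i).trans (hgh i)
  le_antisymm f g h1 h2 := lp.ext (funext fun i => le_antisymm (h1 i) (h2 i))

instance lpcLattice : Lattice (lpc C) :=
  { lpcPO with
    sup := fun f g => ⟨fun i => f i ⊔ g i, lpc_mem_sup f g⟩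
    le_sup_left := fun f g i => le_sup_left
    le_sup_right := fun f g i => le_sup_right
    sup_le := fun f g h hfh hgh i => sup_le (hfh i) (hgh i)
    inf := fun f g => ⟨fun i => f i ⊓ g i, lpc_mem_inf f g⟩
    inf_le_left := fun f g i => inf_le_left
    inf_le_right := fun f g i => inf_le_right
    le_inf := fun f g h hfg hfh i => le_inf (hfg i) (hfh i) }

theorem lpc_le_iff {f g : lpc C} : f ≤ g ↔ ∀ i, f i ≤ g i := Iff.rfl

theorem lpc_sup_apply (f g : lpc C) (i : ι) : (f ⊔ g) i = f i ⊔ g i := rfl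

theorem lpc_inf_apply (f g : lpc C) (i : ι) : (f ⊓ g) i = f i ⊓ g i := rfl

theorem lpc_abs_apply (f : lpc C) (i : ι) : |f| i = |f i| := by
  have h1 : |f| = f ⊔ -f := rfl
  have h2 : |f i| = f i ⊔ -(f i) := rfl
  rw [h1, h2, lpc_sup_apply]
  congr 1

instance lpcHSN : HasSolidNorm (lpc C) where
    solid := by
      intro f g h
      refine lp.norm_le_of_forall_le (norm_nonneg g) fun i => ?_
      refine (HasSolidNorm.solid ?_).trans (lp.norm_apply_le_norm ENNReal.top_ne_zero g i)
      have := h i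
      rwa [lpc_abs_apply, lpc_abs_apply] at this

instance lpcIOAM : IsOrderedAddMonoid (lpc C) where
    add_le_add_left := by
      intro f g h k i
      have h1 : (f + k) i = f i + k i := by rw [lp.coeFn_add]; rfl
      have h2 : (g + k) i = g i + k i := by rw [lp.coeFn_add]; rfl
      rw [h1, h2]
      exact add_le_add (h i) le_rfl

end LpLattice

section LpBFA

variable {ι : Type} {C : ι → BanachFAlg}

theorem lpc_add_apply (f g : lpc C) (i : ι) : (f + g) i = f i + g i := by
  rw [lp.coeFn_add]; rfl

theorem lpc_smul_apply (r : ℝ) (f : lpc C) (i : ι) : (r • f) i = r • f i := by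
  rw [lp.coeFn_smul]; rfl

theorem lpc_zero_apply (i : ι) : (0 : lpc C) i = 0 := by
  rw [lp.coeFn_zero]; rfl

theorem lpc_nonneg {f : lpc C} : 0 ≤ f ↔ ∀ i, 0 ≤ f i := by
  constructor
  · intro h i; have := h i; rwa [lpc_zero_apply] at this
  · intro h i; rw [lpc_zero_apply]; exact h i

noncomputable def lpMul (f g : lpc C) : lpc C :=
  ⟨fun i => (C i).mul (f i) (g i), by
    apply memℓp_infty
    refine ⟨‖f‖ * ‖g‖, ?_⟩
    rintro _ ⟨i, rfl⟩
    exact ((C i).norm_mul_le' _ _).trans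
      (mul_le_mul (lp.norm_apply_le_norm ENNReal.top_ne_zero f i)
        (lp.norm_apply_le_norm ENNReal.top_ne_zero g i) (norm_nonneg _) (norm_nonneg _))⟩

theorem lpMul_apply (f g : lpc C) (i : ι) : (lpMul f g) i = (C i).mul (f i) (g i) := rfl

@[reducible] noncomputable def lpBFA (ι : Type) (C : ι → BanachFAlg) : BanachFAlg where
  carrier := lpc C
  mul := lpMul
  mul_assoc' f g h := lp.ext (funext fun i => (C i).mul_assoc' _ _ _)
  add_mul' f g h := by
    refine lp.ext (funext fun i => ?_)
    show lpMul (f + g) h i = (lpMul f h + lpMul g h) i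
    rw [lpc_add_apply, lpMul_apply, lpc_add_apply, lpMul_apply, lpMul_apply]
    exact (C i).add_mul' _ _ _
  mul_add' f g h := by
    refine lp.ext (funext fun i => ?_)
    show lpMul f (g + h) i = (lpMul f g + lpMul f h) i
    rw [lpc_add_apply, lpMul_apply, lpc_add_apply, lpMul_apply, lpMul_apply]
    exact (C i).mul_add' _ _ _
  smul_mul' r f g := by
    refine lp.ext (funext fun i => ?_)
    show lpMul (r • f) g i = (r • lpMul f g) i
    rw [lpc_smul_apply, lpMul_apply, lpc_smul_apply, lpMul_apply]
    exact (C i).smul_mul' _ _ _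
  mul_smul' r f g := by
    refine lp.ext (funext fun i => ?_)
    show lpMul f (r • g) i = (r • lpMul f g) i
    rw [lpc_smul_apply, lpMul_apply, lpc_smul_apply, lpMul_apply]
    exact (C i).mul_smul' _ _ _
  mul_nonneg' f g hf hg := by
    rw [lpc_nonneg]
    intro i
    exact (C i).mul_nonneg' _ _ (lpc_nonneg.mp hf i) (lpc_nonneg.mp hg i)
  inf_mul_left' f g h hfg hh := by
    refine lp.ext (funext fun i => ?_)
    have hpt : f i ⊓ g i = 0 := by
      have h2 := congrFun (congrArg Subtype.val hfg) i
      have h3 : (f ⊓ g) i = (0 : lpc C) i := h2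
      rwa [lpc_inf_apply, lpc_zero_apply] at h3
    show (lpMul h f ⊓ g) i = (0 : lpc C) i
    rw [lpc_inf_apply, lpc_zero_apply, lpMul_apply]
    exact (C i).inf_mul_left' _ _ _ hpt (lpc_nonneg.mp hh i)
  inf_mul_right' f g h hfg hh := by
    refine lp.ext (funext fun i => ?_)
    have hpt : f i ⊓ g i = 0 := by
      have h2 := congrFun (congrArg Subtype.val hfg) i
      have h3 : (f ⊓ g) i = (0 : lpc C) i := h2
      rwa [lpc_inf_apply, lpc_zero_apply] at h3
    show (lpMul f h ⊓ g) i = (0 : lpc C) i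
    rw [lpc_inf_apply, lpc_zero_apply, lpMul_apply]
    exact (C i).inf_mul_right' _ _ _ hpt (lpc_nonneg.mp hh i)
  norm_mul_le' f g := by
    refine lp.norm_le_of_forall_le (mul_nonneg (norm_nonneg f) (norm_nonneg g)) fun i => ?_
    rw [lpMul_apply]
    exact ((C i).norm_mul_le' _ _).trans
      (mul_le_mul (lp.norm_apply_le_norm ENNReal.top_ne_zero f i)
        (lp.norm_apply_le_norm ENNReal.top_ne_zero g i) (norm_nonneg _) (norm_nonneg _))

end LpBFA

section FreeIdx

variable (E : Type) [NormedAddCommGroup E] [NormedSpace ℝ E]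

def Adm (B : BanachFAlg) (T : E → B.carrier) : Prop :=
  (∀ x y, T (x + y) = T x + T y) ∧ (∀ (r : ℝ) (x : E), T (r • x) = r • T x)
    ∧ (∀ x, ‖T x‖ ≤ ‖x‖)

def Idx : Type :=
  {ν : FT E → ℝ // ∃ B : BanachFAlg, ∃ T : E → B.carrier,
    Adm E B T ∧ ∀ w, ν w = ‖fev B T w‖}

variable {E}

noncomputable def iB (i : Idx E) : BanachFAlg := i.2.choose

noncomputable def iT (i : Idx E) : E → (iB i).carrier := i.2.choose_spec.choose

theorem iT_adm (i : Idx E) : Adm E (iB i) (iT i) := i.2.choose_spec.choose_spec.1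

theorem iT_eq (i : Idx E) : ∀ w, i.1 w = ‖fev (iB i) (iT i) w‖ :=
  i.2.choose_spec.choose_spec.2

variable (E)

noncomputable def mkIdx (B : BanachFAlg) (T : E → B.carrier) (h : Adm E B T) : Idx E :=
  ⟨fun w => ‖fev B T w‖, B, T, h, fun _ => rfl⟩

theorem mkIdx_norm (B : BanachFAlg) (T : E → B.carrier) (h : Adm E B T) (w : FT E) :
    ‖fev (iB (mkIdx E B T h)) (iT (mkIdx E B T h)) w‖ = ‖fev B T w‖ := by
  rw [← iT_eq (mkIdx E B T h) w]; rfl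

noncomputable def Theta (w : FT E) : lpc (iB (E := E)) :=
  ⟨fun i => fev (iB i) (iT i) w, by
    apply memℓp_infty
    refine ⟨bnd w, ?_⟩
    rintro _ ⟨i, rfl⟩
    exact fev_bnd (iB i) (iT i) (iT_adm i).2.2 w⟩

theorem Theta_apply (w : FT E) (i : Idx E) :
    Theta E w i = fev (iB i) (iT i) w := rfl

theorem ineqA (B : BanachFAlg) (T : E → B.carrier) (h : Adm E B T) (w : FT E) :
    ‖fev B T w‖ ≤ ‖Theta E w‖ := by
  rw [← mkIdx_norm E B T h w]
  exact lp.norm_apply_le_norm ENNReal.top_ne_zero (Theta E w) (mkIdx E B T h)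

theorem Theta_add (u v : FT E) : Theta E (FT.add u v) = Theta E u + Theta E v := by
  refine lp.ext (funext fun i => ?_)
  show Theta E (FT.add u v) i = (Theta E u + Theta E v) i
  rw [lpc_add_apply, Theta_apply, Theta_apply, Theta_apply]
  rfl

theorem Theta_smul (r : ℝ) (u : FT E) : Theta E (FT.smul r u) = r • Theta E u := by
  refine lp.ext (funext fun i => ?_)
  show Theta E (FT.smul r u) i = (r • Theta E u) i
  rw [lpc_smul_apply, Theta_apply, Theta_apply]
  rfl

theorem Theta_mul (u v : FT E) :
    Theta E (FT.mul u v) = lpMul (Theta E u) (Theta E v) := by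
  refine lp.ext (funext fun i => ?_)
  show Theta E (FT.mul u v) i = lpMul (Theta E u) (Theta E v) i
  rw [lpMul_apply, Theta_apply, Theta_apply, Theta_apply]
  rfl

theorem Theta_sup (u v : FT E) : Theta E (FT.sup u v) = Theta E u ⊔ Theta E v := by
  refine lp.ext (funext fun i => ?_)
  show Theta E (FT.sup u v) i = (Theta E u ⊔ Theta E v) i
  rw [lpc_sup_apply, Theta_apply, Theta_apply, Theta_apply]
  rfl

theorem ineqB (B : BanachFAlg) (T : E → B.carrier) {c : ℝ}
    (hadd : ∀ x y, T (x + y) = T x + T y)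
    (hsmul : ∀ (r : ℝ) (x : E), T (r • x) = r • T x)
    (hc : ∀ x, ‖T x‖ ≤ c * ‖x‖) (hc0 : 0 ≤ c) (hc1 : c ≤ 1) (w : FT E) :
    ‖fev B T w‖ ≤ c * ‖Theta E w‖ := by
  rcases eq_or_lt_of_le hc0 with hc0' | hc0'
  · have hT0 : T = fun _ => (0 : B.carrier) := by
      funext x
      have := hc x
      rw [← hc0', zero_mul] at this
      exact norm_le_zero_iff.mp this
    rw [hT0, fev_zero_map, norm_zero, ← hc0', zero_mul]
  · have hcmem : c ∈ Set.Ioc (0:ℝ) 1 := ⟨hc0', hc1⟩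
    have hS : ∀ x : E, ‖c⁻¹ • T x‖ ≤ ‖x‖ := by
      intro x
      rw [norm_smul, Real.norm_eq_abs, abs_of_pos (inv_pos.mpr hc0')]
      calc c⁻¹ * ‖T x‖ ≤ c⁻¹ * (c * ‖x‖) :=
            mul_le_mul_of_nonneg_left (hc x) (inv_pos.mpr hc0').le
        _ = ‖x‖ := by field_simp
    have memT' : ∀ x : E, Memℓp (fun _ : ↥(Set.Ioc (0:ℝ) 1) =>
        c⁻¹ • T x : ∀ _ : ↥(Set.Ioc (0:ℝ) 1), B.carrier) ∞ := by
      intro x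
      apply memℓp_infty
      exact ⟨‖c⁻¹ • T x‖, by rintro _ ⟨u, rfl⟩; exact le_rfl⟩
    let CW : ↥(Set.Ioc (0:ℝ) 1) → BanachFAlg := fun u => rescale B u.1 u.2.1 u.2.2
    let T' : E → lpc CW := fun x => ⟨fun _ => c⁻¹ • T x, memT' x⟩
    have hT'adm : Adm E (lpBFA (↥(Set.Ioc (0:ℝ) 1)) CW) T' := by
      refine ⟨fun x y => ?_, fun r x => ?_, fun x => ?_⟩
      · refine lp.ext (funext fun u => ?_)
        show c⁻¹ • T (x + y) = (T' x + T' y) u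
        rw [lpc_add_apply]
        show c⁻¹ • T (x + y) = c⁻¹ • T x + c⁻¹ • T y
        rw [hadd x y, smul_add]
      · refine lp.ext (funext fun u => ?_)
        show c⁻¹ • T (r • x) = (r • T' x) u
        rw [lpc_smul_apply]
        show c⁻¹ • T (r • x) = r • (c⁻¹ • T x)
        rw [hsmul r x, smul_comm]
      · refine lp.norm_le_of_forall_le (norm_nonneg x) fun u => ?_
        exact hS x
    let u0 : ↥(Set.Ioc (0:ℝ) 1) := ⟨c, hcmem⟩
    let Φ : lpc CW → B.carrier := fun h => c • (h u0)
    have hkey : Φ (fev (lpBFA (↥(Set.Ioc (0:ℝ) 1)) CW) T' w) = fev B T w := by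
      refine fev_map (B := lpBFA (↥(Set.Ioc (0:ℝ) 1)) CW) (C := B) (T := T') (T' := T) Φ
        ?_ ?_ ?_ ?_ ?_ w
      · intro a b
        show c • ((a + b) u0) = c • (a u0) + c • (b u0)
        rw [lpc_add_apply, smul_add]
      · intro r a
        show c • ((r • a) u0) = r • (c • (a u0))
        rw [lpc_smul_apply, smul_comm]
      · intro a b
        show c • ((lpMul a b) u0) = B.mul (c • a u0) (c • b u0)
        rw [lpMul_apply]
        show c • (c • B.mul (a u0) (b u0)) = B.mul (c • a u0) (c • b u0)
        have e1 := B.smul_mul' c (a u0) (c • b u0)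
        have e2 := B.mul_smul' c (a u0) (b u0)
        exact (e1.trans (congrArg (c • ·) e2)).symm
      · intro a b
        show c • ((a ⊔ b) u0) = c • (a u0) ⊔ c • (b u0)
        rw [lpc_sup_apply, mySmulSup hc0']
      · intro x
        show c • (c⁻¹ • T x) = T x
        rw [smul_smul, mul_inv_cancel₀ hc0'.ne', one_smul]
    have h1 : ‖fev B T w‖ = c * ‖(fev (lpBFA (↥(Set.Ioc (0:ℝ) 1)) CW) T' w) u0‖ := by
      rw [← hkey]
      show ‖c • ((fev (lpBFA (↥(Set.Ioc (0:ℝ) 1)) CW) T' w) u0)‖ = _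
      rw [norm_smul, Real.norm_eq_abs, abs_of_pos hc0']
    rw [h1]
    refine mul_le_mul_of_nonneg_left ?_ hc0
    calc ‖(fev (lpBFA (↥(Set.Ioc (0:ℝ) 1)) CW) T' w) u0‖
        ≤ ‖fev (lpBFA (↥(Set.Ioc (0:ℝ) 1)) CW) T' w‖ :=
          lp.norm_apply_le_norm ENNReal.top_ne_zero _ _
      _ ≤ ‖Theta E w‖ := ineqA E (lpBFA (↥(Set.Ioc (0:ℝ) 1)) CW) T' hT'adm w

end FreeIdx

section ClosureOps

theorem closure_binop {X : Type*} [TopologicalSpace X] {f : X × X → X} (hf : Continuous f)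
    {s : Set X} (h : ∀ a ∈ s, ∀ b ∈ s, f (a, b) ∈ s) {a b : X}
    (ha : a ∈ closure s) (hb : b ∈ closure s) : f (a, b) ∈ closure s := by
  have h1 : (a, b) ∈ closure (s ×ˢ s) := by
    rw [closure_prod_eq]; exact ⟨ha, hb⟩
  have h2 : f (a, b) ∈ f '' closure (s ×ˢ s) := ⟨(a, b), h1, rfl⟩
  have h3 : f '' closure (s ×ˢ s) ⊆ closure (f '' (s ×ˢ s)) :=
    image_closure_subset_closure_image hf
  have h4 : f '' (s ×ˢ s) ⊆ s := by
    rintro _ ⟨⟨x, y⟩, ⟨hx, hy⟩, rfl⟩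
    exact h x hx y hy
  exact closure_mono h4 (h3 h2)

end ClosureOps

section TheSpace

variable (E : Type) [NormedAddCommGroup E] [NormedSpace ℝ E]

noncomputable def SM : Submodule ℝ (lpc (iB (E := E))) where
  carrier := Set.range (Theta E)
  add_mem' := by rintro _ _ ⟨u, rfl⟩ ⟨v, rfl⟩; exact ⟨FT.add u v, Theta_add E u v⟩
  zero_mem' := ⟨FT.smul 0 (FT.of 0), by rw [Theta_smul]; exact zero_smul ℝ _⟩
  smul_mem' := by rintro r _ ⟨u, rfl⟩; exact ⟨FT.smul r u, Theta_smul E r u⟩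

noncomputable def ACl : Submodule ℝ (lpc (iB (E := E))) := (SM E).topologicalClosure

variable {E}

theorem mem_ACl_iff {x : lpc (iB (E := E))} :
    x ∈ ACl E ↔ x ∈ closure (Set.range (Theta E)) := Iff.rfl

theorem ACl_sup_mem {x y : lpc (iB (E := E))} (hx : x ∈ ACl E) (hy : y ∈ ACl E) :
    x ⊔ y ∈ ACl E := by
  rw [mem_ACl_iff] at *
  exact closure_binop continuous_sup
    (by rintro _ ⟨u, rfl⟩ _ ⟨v, rfl⟩; exact ⟨FT.sup u v, Theta_sup E u v⟩) hx hy

theorem ACl_mul_mem {x y : lpc (iB (E := E))} (hx : x ∈ ACl E) (hy : y ∈ ACl E) :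
    lpMul x y ∈ ACl E := by
  rw [mem_ACl_iff] at *
  exact closure_binop (bfa_mul_continuous (lpBFA (Idx E) iB))
    (by rintro _ ⟨u, rfl⟩ _ ⟨v, rfl⟩; exact ⟨FT.mul u v, Theta_mul E u v⟩) hx hy

theorem ACl_inf_mem {x y : lpc (iB (E := E))} (hx : x ∈ ACl E) (hy : y ∈ ACl E) :
    x ⊓ y ∈ ACl E := by
  have h1 : x ⊓ y = -((-x) ⊔ (-y)) := by rw [← neg_inf, neg_neg]
  rw [h1]
  exact (ACl E).neg_mem (ACl_sup_mem ((ACl E).neg_mem hx) ((ACl E).neg_mem hy))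

noncomputable instance AClCS : CompleteSpace ↥(ACl E) :=
  (SM E).isClosed_topologicalClosure.completeSpace_coe

noncomputable instance AClLattice : Lattice ↥(ACl E) :=
  { (inferInstance : PartialOrder ↥(ACl E)) with
    sup := fun x y => ⟨x.val ⊔ y.val, ACl_sup_mem x.2 y.2⟩
    le_sup_left := fun x y => (le_sup_left : x.val ≤ x.val ⊔ y.val)
    le_sup_right := fun x y => (le_sup_right : y.val ≤ x.val ⊔ y.val)
    sup_le := fun x y z hxz hyz =>
      show x.val ⊔ y.val ≤ z.val from sup_le (hxz : x.val ≤ z.val) (hyz : y.val ≤ z.val)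
    inf := fun x y => ⟨x.val ⊓ y.val, ACl_inf_mem x.2 y.2⟩
    inf_le_left := fun x y => (inf_le_left : x.val ⊓ y.val ≤ x.val)
    inf_le_right := fun x y => (inf_le_right : x.val ⊓ y.val ≤ y.val)
    le_inf := fun x y z hxy hxz =>
      show x.val ≤ y.val ⊓ z.val from le_inf (hxy : x.val ≤ y.val) (hxz : x.val ≤ z.val) }

theorem ACl_sup_val (x y : ↥(ACl E)) : (x ⊔ y).val = x.val ⊔ y.val := rfl
theorem ACl_inf_val (x y : ↥(ACl E)) : (x ⊓ y).val = x.val ⊓ y.val := rfl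
theorem ACl_le_iff {x y : ↥(ACl E)} : x ≤ y ↔ x.val ≤ y.val := Iff.rfl
theorem ACl_abs_val (x : ↥(ACl E)) : (|x|).val = |x.val| := by
  have h1 : |x| = x ⊔ -x := rfl
  have h2 : |x.val| = x.val ⊔ -(x.val) := rfl
  rw [h1, h2, ACl_sup_val]
  rfl

instance AClHSN : HasSolidNorm ↥(ACl E) where
    solid := by
      intro x y h
      have hval : |x.val| ≤ |y.val| := by
        have := ACl_le_iff.mp h
        rwa [ACl_abs_val, ACl_abs_val] at this
      have : ‖x.val‖ ≤ ‖y.val‖ := HasSolidNorm.solid hval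
      exact this

instance AClIOAM : IsOrderedAddMonoid ↥(ACl E) where
    add_le_add_left := by
      intro x y h z
      have : x.val + z.val ≤ y.val + z.val := add_le_add (ACl_le_iff.mp h) le_rfl
      exact this

noncomputable def ABFA : BanachFAlg where
  carrier := ↥(ACl E)
  mul a b := ⟨lpMul a.val b.val, ACl_mul_mem a.2 b.2⟩
  mul_assoc' a b c := Subtype.ext ((lpBFA (Idx E) iB).mul_assoc' a.val b.val c.val)
  add_mul' a b c := Subtype.ext ((lpBFA (Idx E) iB).add_mul' a.val b.val c.val)
  mul_add' a b c := Subtype.ext ((lpBFA (Idx E) iB).mul_add' a.val b.val c.val)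
  smul_mul' r a b := Subtype.ext ((lpBFA (Idx E) iB).smul_mul' r a.val b.val)
  mul_smul' r a b := Subtype.ext ((lpBFA (Idx E) iB).mul_smul' r a.val b.val)
  mul_nonneg' a b ha hb :=
    ((lpBFA (Idx E) iB).mul_nonneg' a.val b.val ha hb : (0:lpc (iB (E := E))) ≤ _)
  inf_mul_left' a b c h hc := by
    refine Subtype.ext ?_
    have hval : a.val ⊓ b.val = 0 := congrArg Subtype.val h
    exact (lpBFA (Idx E) iB).inf_mul_left' a.val b.val c.val hval hc
  inf_mul_right' a b c h hc := by
    refine Subtype.ext ?_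
    have hval : a.val ⊓ b.val = 0 := congrArg Subtype.val h
    exact (lpBFA (Idx E) iB).inf_mul_right' a.val b.val c.val hval hc
  norm_mul_le' a b := (lpBFA (Idx E) iB).norm_mul_le' a.val b.val

end TheSpace

section Eta

variable (E : Type) [NormedAddCommGroup E] [NormedSpace ℝ E]

theorem theta_of_mem (x : E) : Theta E (FT.of x) ∈ ACl E :=
  (SM E).le_topologicalClosure ⟨FT.of x, rfl⟩

noncomputable def eta : E →ₗᵢ[ℝ] (ABFA (E := E)).carrier where
  toLinearMap :=
    { toFun := fun x => (⟨Theta E (FT.of x), theta_of_mem E x⟩ : ↥(ACl E))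
      map_add' := by
        intro x y
        refine Subtype.ext ?_
        show Theta E (FT.of (x + y)) = Theta E (FT.of x) + Theta E (FT.of y)
        rw [← Theta_add]
        refine lp.ext (funext fun i => ?_)
        show fev (iB i) (iT i) (FT.of (x + y)) = fev (iB i) (iT i) (FT.add (FT.of x) (FT.of y))
        show iT i (x + y) = iT i x + iT i y
        exact (iT_adm i).1 x y
      map_smul' := by
        intro r x
        refine Subtype.ext ?_
        show Theta E (FT.of (r • x)) = r • Theta E (FT.of x)
        rw [← Theta_smul]
        refine lp.ext (funext fun i => ?_)
        show iT i (r • x) = r • iT i x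
        exact (iT_adm i).2.1 r x }
  norm_map' := by
    intro x
    show ‖Theta E (FT.of x)‖ = ‖x‖
    refine le_antisymm ?_ ?_
    · refine lp.norm_le_of_forall_le (norm_nonneg x) fun i => ?_
      exact (iT_adm i).2.2 x
    · obtain ⟨g, hg1, hg2⟩ := exists_dual_vector'' ℝ x
      have hadm : Adm E RBFA (fun y => g y) := by
        refine ⟨fun a b => map_add g a b, fun r a => map_smul g r a, fun y => ?_⟩
        calc ‖g y‖ ≤ ‖g‖ * ‖y‖ := g.le_opNorm y
          _ ≤ 1 * ‖y‖ := mul_le_mul_of_nonneg_right hg1 (norm_nonneg y)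
          _ = ‖y‖ := one_mul _
      have h1 : ‖fev RBFA (fun y => g y) (FT.of x)‖ ≤ ‖Theta E (FT.of x)‖ :=
        ineqA E RBFA _ hadm (FT.of x)
      have h2 : ‖fev RBFA (fun y => g y) (FT.of x)‖ = ‖x‖ := by
        show ‖g x‖ = ‖x‖
        rw [hg2]
        exact norm_norm x
      rw [← h2]; exact h1

end Eta

section Universal

variable {E : Type} [NormedAddCommGroup E] [NormedSpace ℝ E]

noncomputable def mkA (w : FT E) : ↥(ACl E) :=
  ⟨Theta E w, (SM E).le_topologicalClosure ⟨w, rfl⟩⟩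

theorem mkA_norm (w : FT E) : ‖mkA w‖ = ‖Theta E w‖ := rfl

theorem mkA_add (u v : FT E) : mkA (FT.add u v) = mkA u + mkA v :=
  Subtype.ext (Theta_add E u v)

theorem mkA_smul (r : ℝ) (u : FT E) : mkA (FT.smul r u) = r • mkA u :=
  Subtype.ext (Theta_smul E r u)

theorem mkA_mul (u v : FT E) : mkA (FT.mul u v) = (ABFA (E := E)).mul (mkA u) (mkA v) :=
  Subtype.ext (Theta_mul E u v)

theorem mkA_sup (u v : FT E) : mkA (FT.sup u v) = mkA u ⊔ mkA v :=
  Subtype.ext (Theta_sup E u v)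

noncomputable def eSM : ↥(SM E) →L[ℝ] ↥(ACl E) :=
  LinearMap.mkContinuous
    { toFun := fun d => ⟨d.val, (SM E).le_topologicalClosure d.2⟩
      map_add' := fun a b => Subtype.ext rfl
      map_smul' := fun r a => Subtype.ext rfl }
    1 (fun d => by
      show ‖d.val‖ ≤ 1 * ‖d‖
      rw [one_mul]; exact le_rfl)

theorem eSM_isometry : Isometry (eSM (E := E)) :=
  AddMonoidHomClass.isometry_of_norm _ (fun d => rfl)

theorem eSM_denseRange : DenseRange (eSM (E := E)) := by
  rw [Metric.denseRange_iff]
  intro a r hr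
  have ha : a.val ∈ closure (Set.range (Theta E)) := a.2
  rw [Metric.mem_closure_iff] at ha
  obtain ⟨b, hb, hdist⟩ := ha r hr
  refine ⟨⟨b, hb⟩, ?_⟩
  show dist a (eSM ⟨b, hb⟩) < r
  have : dist a (eSM ⟨b, hb⟩) = dist a.val b := by
    rw [dist_eq_norm, dist_eq_norm]
    show ‖(a - eSM ⟨b, hb⟩ : ↥(ACl E)).val‖ = ‖a.val - b‖
    rfl
  rw [this]; exact hdist

variable (B : BanachFAlg) (T : E →L[ℝ] B.carrier)

theorem fev_indep (hT : ‖T‖ ≤ 1) {w w' : FT E} (h : Theta E w = Theta E w') :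
    fev B (⇑T) w = fev B (⇑T) w' := by
  have hadm : Adm E B ⇑T := by
    refine ⟨fun x y => map_add T x y, fun r x => map_smul T r x, fun x => ?_⟩
    calc ‖T x‖ ≤ ‖T‖ * ‖x‖ := T.le_opNorm x
      _ ≤ 1 * ‖x‖ := mul_le_mul_of_nonneg_right hT (norm_nonneg x)
      _ = ‖x‖ := one_mul _
  have hzero : fev B (⇑T) w - fev B (⇑T) w' =
      fev B (⇑T) (FT.add w (FT.smul (-1) w')) := by
    show _ = fev B (⇑T) w + (-1 : ℝ) • fev B (⇑T) w'
    rw [neg_one_smul, sub_eq_add_neg]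
  have hnorm : ‖fev B (⇑T) (FT.add w (FT.smul (-1) w'))‖ ≤
      ‖Theta E (FT.add w (FT.smul (-1) w'))‖ := ineqA E B ⇑T hadm _
  have hTheta : Theta E (FT.add w (FT.smul (-1) w')) = 0 := by
    rw [Theta_add, Theta_smul, neg_one_smul, h, add_neg_cancel]
  rw [hTheta, norm_zero] at hnorm
  have : fev B (⇑T) w - fev B (⇑T) w' = 0 := by
    rw [hzero]
    exact norm_le_zero_iff.mp hnorm
  exact sub_eq_zero.mp this

theorem fev_of_mem (d : ↥(SM E)) : ∃ w : FT E, Theta E w = d.val := d.2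

noncomputable def PhiFun (d : ↥(SM E)) : B.carrier := fev B (⇑T) (fev_of_mem d).choose

theorem PhiFun_eq (hT : ‖T‖ ≤ 1) {d : ↥(SM E)} {w : FT E} (h : Theta E w = d.val) :
    PhiFun B T d = fev B (⇑T) w :=
  fev_indep B T hT ((fev_of_mem d).choose_spec.trans h.symm)

theorem PhiFun_bound (hT : ‖T‖ ≤ 1) (d : ↥(SM E)) : ‖PhiFun B T d‖ ≤ ‖T‖ * ‖d‖ := by
  obtain ⟨w, hw⟩ := fev_of_mem d
  rw [PhiFun_eq B T hT hw]
  have : ‖d‖ = ‖Theta E w‖ := by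
    have h2 : ‖d‖ = ‖d.val‖ := rfl
    rw [h2, ← hw]
  rw [this]
  exact ineqB E B ⇑T (fun x y => map_add T x y) (fun r x => map_smul T r x)
    (fun x => T.le_opNorm x) (norm_nonneg T) hT w

noncomputable def PhiCLM (hT : ‖T‖ ≤ 1) : ↥(SM E) →L[ℝ] B.carrier :=
  LinearMap.mkContinuous
    { toFun := PhiFun B T
      map_add' := by
        intro a b
        obtain ⟨u, hu⟩ := fev_of_mem a
        obtain ⟨v, hv⟩ := fev_of_mem b
        have hab : Theta E (FT.add u v) = (a + b).val := by
          rw [Theta_add, hu, hv]; rfl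
        rw [PhiFun_eq B T hT hab, PhiFun_eq B T hT hu, PhiFun_eq B T hT hv]
        rfl
      map_smul' := by
        intro r a
        obtain ⟨u, hu⟩ := fev_of_mem a
        have hra : Theta E (FT.smul r u) = (r • a).val := by
          rw [Theta_smul, hu]; rfl
        show PhiFun B T (r • a) = (RingHom.id ℝ) r • PhiFun B T a
        rw [PhiFun_eq B T hT hra, PhiFun_eq B T hT hu]
        rfl }
    ‖T‖ (PhiFun_bound B T hT)

noncomputable def That (hT : ‖T‖ ≤ 1) : ↥(ACl E) →L[ℝ] B.carrier :=
  (PhiCLM B T hT).extend eSM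

theorem That_mkA (hT : ‖T‖ ≤ 1) (w : FT E) : That B T hT (mkA w) = fev B (⇑T) w := by
  have h1 : mkA w = eSM (⟨Theta E w, ⟨w, rfl⟩⟩ : ↥(SM E)) := Subtype.ext rfl
  rw [h1]
  show That B T hT (eSM _) = _
  unfold That
  rw [ContinuousLinearMap.extend_eq (h_dense := eSM_denseRange) (h_e := eSM_isometry.isUniformInducing)]
  exact PhiFun_eq B T hT rfl

theorem denseDA : Dense (Set.range (mkA (E := E))) := by
  have h1 : Set.range (eSM (E := E)) = Set.range (mkA (E := E)) := by
    ext a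
    constructor
    · rintro ⟨d, rfl⟩
      obtain ⟨w, hw⟩ := fev_of_mem d
      exact ⟨w, Subtype.ext hw⟩
    · rintro ⟨w, rfl⟩
      exact ⟨⟨Theta E w, ⟨w, rfl⟩⟩, Subtype.ext rfl⟩
  have := eSM_denseRange (E := E)
  rwa [DenseRange, h1] at this

end Universal

section Main

variable {E : Type} [NormedAddCommGroup E] [NormedSpace ℝ E]

theorem eta_eq_mkA (x : E) : eta E x = mkA (FT.of x) := Subtype.ext rfl

theorem main_free : IsFreeBanachFAlg E (ABFA (E := E)) (eta E) := by
  intro B T hT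
  refine ⟨That B T hT, ⟨⟨?_, ?_⟩, ?_, ?_⟩, ?_⟩
  · -- multiplicative
    have hfeq : (fun p : ↥(ACl E) × ↥(ACl E) => That B T hT ((ABFA (E := E)).mul p.1 p.2))
        = fun p : ↥(ACl E) × ↥(ACl E) => B.mul (That B T hT p.1) (That B T hT p.2) := by
      refine Continuous.ext_on (denseDA.prod denseDA) ?_ ?_ ?_
      · exact (That B T hT).continuous.comp (bfa_mul_continuous (ABFA (E := E)))
      · exact (bfa_mul_continuous B).comp
          (((That B T hT).continuous.comp continuous_fst).prodMk
            ((That B T hT).continuous.comp continuous_snd))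
      · rintro ⟨a, b⟩ ⟨⟨u, rfl⟩, ⟨v, rfl⟩⟩
        show That B T hT ((ABFA (E := E)).mul (mkA u) (mkA v))
            = B.mul (That B T hT (mkA u)) (That B T hT (mkA v))
        rw [← mkA_mul, That_mkA, That_mkA, That_mkA]
        rfl
    intro a b
    exact congrFun hfeq (a, b)
  · -- sup-preserving
    have hfeq : (fun p : ↥(ACl E) × ↥(ACl E) => That B T hT (p.1 ⊔ p.2))
        = fun p : ↥(ACl E) × ↥(ACl E) => That B T hT p.1 ⊔ That B T hT p.2 := by
      refine Continuous.ext_on (denseDA.prod denseDA) ?_ ?_ ?_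
      · exact (That B T hT).continuous.comp continuous_sup
      · exact continuous_sup.comp
          (((That B T hT).continuous.comp continuous_fst).prodMk
            ((That B T hT).continuous.comp continuous_snd))
      · rintro ⟨a, b⟩ ⟨⟨u, rfl⟩, ⟨v, rfl⟩⟩
        show That B T hT (mkA u ⊔ mkA v) = That B T hT (mkA u) ⊔ That B T hT (mkA v)
        rw [← mkA_sup, That_mkA, That_mkA, That_mkA]
        rfl
    intro a b
    exact congrFun hfeq (a, b)
  · -- agreement
    intro x
    rw [eta_eq_mkA]
    exact That_mkA B T hT (FT.of x)
  · -- norm equality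
    have hub : ∀ a : ↥(ACl E), ‖That B T hT a‖ ≤ ‖T‖ * ‖a‖ := by
      have hclosed : IsClosed {a : ↥(ACl E) | ‖That B T hT a‖ ≤ ‖T‖ * ‖a‖} :=
        isClosed_le ((That B T hT).continuous.norm) (continuous_const.mul continuous_norm)
      have hsub : Set.range (mkA (E := E)) ⊆ {a : ↥(ACl E) | ‖That B T hT a‖ ≤ ‖T‖ * ‖a‖} := by
        rintro _ ⟨w, rfl⟩
        show ‖That B T hT (mkA w)‖ ≤ ‖T‖ * ‖mkA w‖
        rw [That_mkA, mkA_norm]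
        exact ineqB E B ⇑T (fun x y => map_add T x y) (fun r x => map_smul T r x)
          (fun x => T.le_opNorm x) (norm_nonneg T) hT w
      intro a
      have hcl : closure (Set.range (mkA (E := E))) ⊆
          {a : ↥(ACl E) | ‖That B T hT a‖ ≤ ‖T‖ * ‖a‖} :=
        hclosed.closure_subset_iff.mpr hsub
      exact hcl (by rw [denseDA.closure_eq]; trivial)
    refine le_antisymm (ContinuousLinearMap.opNorm_le_bound _ (norm_nonneg T) hub) ?_
    refine ContinuousLinearMap.opNorm_le_bound T (norm_nonneg _) fun x => ?_
    have h1 : T x = That B T hT (eta E x) := by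
      rw [eta_eq_mkA]
      exact (That_mkA B T hT (FT.of x)).symm
    calc ‖T x‖ = ‖That B T hT (eta E x)‖ := by rw [h1]
      _ ≤ ‖That B T hT‖ * ‖eta E x‖ := (That B T hT).le_opNorm _
      _ = ‖That B T hT‖ * ‖x‖ := by rw [(eta E).norm_map]
  · -- uniqueness
    rintro Ψ ⟨⟨hm, hs⟩, hag, _⟩
    have hcoe : ∀ w : FT E, Ψ (mkA w) = fev B (⇑T) w := by
      intro w
      induction w with
      | of x =>
        rw [← eta_eq_mkA]
        exact hag x
      | add u v ihu ihv => rw [mkA_add]; exact (map_add Ψ (mkA u) (mkA v)).trans (congrArg₂ (· + ·) ihu ihv)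
      | smul r u ih => rw [mkA_smul]; exact (map_smul Ψ r (mkA u)).trans (congrArg (r • ·) ih)
      | mul u v ihu ihv =>
        rw [mkA_mul]
        exact (hm (mkA u) (mkA v)).trans (by rw [ihu, ihv]; rfl)
      | sup u v ihu ihv =>
        rw [mkA_sup]
        exact (hs (mkA u) (mkA v)).trans (by rw [ihu, ihv]; rfl)
    have hco : ⇑Ψ = ⇑(That B T hT) := by
      refine Continuous.ext_on denseDA Ψ.continuous (That B T hT).continuous ?_
      rintro _ ⟨w, rfl⟩
      exact (hcoe w).trans (That_mkA B T hT w).symm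
    exact ContinuousLinearMap.ext fun a => congrFun hco a

end Main


theorem stmt1 (E : Type) [NormedAddCommGroup E] [NormedSpace ℝ E] [CompleteSpace E] :
    ∃ (A : BanachFAlg) (η : E →ₗᵢ[ℝ] A.carrier), IsFreeBanachFAlg E A η := by
  exact ⟨ABFA (E := E), eta E, main_free⟩
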